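/- Let f : N^m → Z be a function such that f is non-increasing in each coordinate (i.e., f(a + e_i) ≤ f(a) for all a and i) and bounded below. Then f is eventually constant: there exists b ∈ N^m such that f(a) = f(b) for all a ≥ b componentwise. -/
import Mathlib


/-- A function `f : ℕ^m → ℤ` that is non-increasing in each coordinate
and bounded below is eventually constant: there exists `b ∈ ℕ^m` such that
`f a = f b` for all `a ≥ b` componentwise. -/
theorem eventually_constant_of_antitone_bddBelow (m : ℕ) (f : (Fin m → ℕ) → ℤ)
    (hmono : ∀ (a : Fin m → ℕ) (i : Fin m),
      f (a + fun j => if j = i then 1 else 0) ≤ f a)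
    (hbdd : ∃ B : ℤ, ∀ a : Fin m → ℕ, B ≤ f a) :
    ∃ b : Fin m → ℕ, ∀ a : Fin m → ℕ, b ≤ a → f a = f b := by
  -- f is antitone
  have key : ∀ n : ℕ, ∀ a c : Fin m → ℕ, a ≤ c → (∑ i, (c i - a i)) = n → f c ≤ f a := by
    intro n
    induction n with
    | zero =>
      intro a c hac hsum
      have : ∀ i, c i - a i = 0 := by
        intro i
        exact Finset.sum_eq_zero_iff.mp hsum i (Finset.mem_univ i)
      have : a = c := by
        funext i
        have h1 : a i ≤ c i := hac i
        have h2 := this i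
        omega
      rw [this]
    | succ n ih =>
      intro a c hac hsum
      have hne : ∃ i, a i < c i := by
        by_contra h
        push_neg at h
        have : ∀ i ∈ Finset.univ, c i - a i = 0 := fun i _ => by
          have := h i; omega
        rw [Finset.sum_congr rfl this] at hsum
        simp at hsum
      obtain ⟨i, hi⟩ := hne
      set a' : Fin m → ℕ := a + fun j => if j = i then 1 else 0 with ha'
      have ha'le : a' ≤ c := by
        intro j
        simp only [ha', Pi.add_apply]
        by_cases hj : j = i
        · subst hj; simp; omega
        · simp [hj]; exact hac j
      have hsum' : (∑ j, (c j - a' j)) = n := by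
        have e1 : (c i - a i) + ∑ j ∈ Finset.univ.erase i, (c j - a j)
            = ∑ j, (c j - a j) := Finset.add_sum_erase _ (fun j => c j - a j) (Finset.mem_univ i)
        have e2 : (c i - a' i) + ∑ j ∈ Finset.univ.erase i, (c j - a' j)
            = ∑ j, (c j - a' j) := Finset.add_sum_erase _ (fun j => c j - a' j) (Finset.mem_univ i)
        have e3 : ∑ j ∈ Finset.univ.erase i, (c j - a' j)
            = ∑ j ∈ Finset.univ.erase i, (c j - a j) := by
          refine Finset.sum_congr rfl fun j hj => ?_
          have hj' : j ≠ i := Finset.ne_of_mem_erase hj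
          simp [ha', hj']
        have e4 : c i - a' i = c i - a i - 1 := by
          simp [ha']
          omega
        omega
      exact le_trans (ih a' c ha'le hsum') (hmono a i)
  have hanti : ∀ a c : Fin m → ℕ, a ≤ c → f c ≤ f a :=
    fun a c hac => key _ a c hac rfl
  -- f attains a minimum
  obtain ⟨B, hB⟩ := hbdd
  obtain ⟨lb, ⟨b, hb⟩, hlb⟩ := Int.exists_least_of_bdd
    (P := fun z => z ∈ Set.range f) ⟨B, fun z ⟨a, ha⟩ => ha ▸ hB a⟩ ⟨f 0, 0, rfl⟩
  refine ⟨b, fun a hba => le_antisymm (hb ▸ hanti b a hba) ?_⟩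
  have := hlb (f a) ⟨a, rfl⟩
  omega
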